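/- Let n, m be integers with n ≥ 0. In the lexicographic product ℤ ×ₗ ℤ with distinguished element (m, 0), the inequality ((2n+1)·v − 2·(m,0)) ⊔ ((m,0) − (2n+2)·v) ⊔ (−v) ≥ 0 holds for all v ∈ ℤ ×ₗ ℤ if and only if m ≤ n. -/

import Mathlib

/-- In the lexicographic product `ℤ ×ₗ ℤ` with distinguished element `(m, 0)`,
the inequality `((2n+1)·v − 2·(m,0)) ⊔ ((m,0) − (2n+2)·v) ⊔ (−v) ≥ 0` holds for
all `v` iff `m ≤ n`. -/
theorem stmt_11 (n : ℕ) (m : ℤ) :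
    (∀ v : ℤ × ℤ,
        toLex ((0 : ℤ), (0 : ℤ)) ≤
          max (max (toLex ((2 * (n : ℤ) + 1) • v - (2 : ℤ) • ((m, 0) : ℤ × ℤ)))
                (toLex (((m, 0) : ℤ × ℤ) - (2 * (n : ℤ) + 2) • v)))
            (toLex (-v))) ↔
      m ≤ (n : ℤ) := by
  constructor
  · intro h
    by_contra hm
    push_neg at hm
    have hm1 : (n : ℤ) + 1 ≤ m := hm
    set N : ℤ := 2 * (n : ℤ) + 1 with hN
    have hNpos : 0 < N := by positivity
    set a : ℤ := 2 * m / N with ha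
    have hle : N * a ≤ 2 * m := by
      rw [ha, mul_comm]; exact Int.ediv_mul_le _ (by positivity)
    have hlt : 2 * m < N * (a + 1) := by have := Int.lt_ediv_add_one_mul_self (2*m) hNpos; rw [ha]; linarith
    have ha1 : 1 ≤ a := by
      rw [ha]; rw [Int.le_ediv_iff_mul_le hNpos]; omega
    have hm2 : m < (2 * (n : ℤ) + 2) * a := by nlinarith
    have := h (a, -1)
    simp only [Prod.smul_mk, smul_eq_mul, Prod.mk_sub_mk, Prod.neg_mk,
      le_max_iff, Prod.Lex.le_iff, ofLex_toLex] at this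
    rcases this with ((h1 | h1) | h1) <;> omega
  · intro hm v
    obtain ⟨a, b⟩ := v
    simp only [Prod.smul_mk, smul_eq_mul, Prod.mk_sub_mk, Prod.neg_mk,
      le_max_iff, Prod.Lex.le_iff, ofLex_toLex]
    rcases lt_trichotomy a 0 with hA | hA | hA
    · right; left; omega
    · subst hA
      rcases le_or_gt b 0 with hb | hb
      · right; right; omega
      · rcases lt_trichotomy m 0 with hM | hM | hM
        · left; left; left; omega
        · left; left; right; constructor; omega; nlinarith
        · left; right; left; omega
    · left; left; left; nlinarith
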